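/- Let n₁ be a positive integer and n₂ a nonnegative integer. Let M₊ be an n₁×n₁ real diagonal positive definite matrix, M₋ an n₂×n₂ real diagonal negative semidefinite matrix, Z₁ an n₁×n₁ real skew-symmetric matrix, Z₃ an n₂×n₂ real skew-symmetric matrix, and Z₂ an n₁×n₂ real matrix. Let J = [[M₊ + Z₁, Z₂], [−Z₂ᵀ, M₋ + Z₃]]. If ‖Z₂‖ < ½·(|λmax(M₋)| + λmin(M₊)) and ½·(|λmax(M₋)| + λmin(M₊)) < λmin(M₊) (i.e., |λmax(M₋)| < λmin(M₊)), then J has an eigenvalue with nonnegative real part; in particular the spectrum of J is not contained in the open left half of the complex plane. -/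

import Mathlib

open Matrix

/-- Smallest eigenvalue of a Hermitian (real symmetric) matrix. -/
noncomputable def lamMin {n : Type*} [Fintype n] [DecidableEq n] {A : Matrix n n ℝ}
    (hA : A.IsHermitian) : ℝ := ⨅ i, hA.eigenvalues i

/-- Largest eigenvalue of a Hermitian (real symmetric) matrix
(by convention `0` for the empty matrix). -/
noncomputable def lamMax {n : Type*} [Fintype n] [DecidableEq n] {A : Matrix n n ℝ}
    (hA : A.IsHermitian) : ℝ := ⨆ i, hA.eigenvalues i

/-- The ℓ²→ℓ² operator norm of a rectangular real matrix. -/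
noncomputable def l2OpNorm {m n : ℕ} (Z : Matrix (Fin m) (Fin n) ℝ) : ℝ :=
  ‖LinearMap.toContinuousLinearMap (Matrix.toEuclideanLin Z)‖

attribute [local instance] Matrix.linftyOpSeminormedAddCommGroup
  Matrix.linftyOpNormedAddCommGroup Matrix.linftyOpNormedSpace
  Matrix.linftyOpNonUnitalSemiNormedRing Matrix.linftyOpSemiNormedRing
  Matrix.linftyOpNonUnitalNormedRing Matrix.linftyOpNormedRing
  Matrix.linftyOpNormedAlgebra

lemma prod_lb {δ : ℝ} (hδ : 0 ≤ δ) : ∀ (s : Multiset ℂ), (∀ z ∈ s, δ ≤ ‖z‖) →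
    δ ^ Multiset.card s ≤ ‖s.prod‖ := by
  intro s
  induction s using Multiset.induction with
  | empty => simp
  | cons a s ih =>
    intro h
    simp only [Multiset.prod_cons, Multiset.card_cons, pow_succ, norm_mul]
    rw [mul_comm (δ ^ Multiset.card s) δ]
    exact mul_le_mul (h a (Multiset.mem_cons_self a s))
      (ih fun z hz => h z (Multiset.mem_cons_of_mem hz)) (pow_nonneg hδ _) (norm_nonneg a)

lemma detEvalCharpoly {n : Type*} [Fintype n] [DecidableEq n] (M : Matrix n n ℂ) (z : ℂ) :
    M.charpoly.eval z = (z • (1 : Matrix n n ℂ) - M).det := by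
  rw [Matrix.charpoly, ← Polynomial.coe_evalRingHom, RingHom.map_det]
  congr 1
  ext i j
  by_cases h : i = j <;>
    simp [h, charmatrix_apply, Matrix.one_apply, Matrix.smul_apply, Matrix.sub_apply,
      Matrix.diagonal_apply]

lemma mem_spec_iff_det {n : Type*} [Fintype n] [DecidableEq n] (M : Matrix n n ℂ) (μ : ℂ) :
    μ ∈ spectrum ℂ M ↔ (μ • (1 : Matrix n n ℂ) - M).det = 0 := by
  rw [spectrum.mem_iff, Algebra.algebraMap_eq_smul_one, Matrix.isUnit_iff_isUnit_det,
    isUnit_iff_ne_zero, not_not]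

lemma dot_transpose {k l : Type*} [Fintype k] [Fintype l] (W : Matrix k l ℝ)
    (u : l → ℝ) (w : k → ℝ) : u ⬝ᵥ (Wᵀ *ᵥ w) = w ⬝ᵥ (W *ᵥ u) := by
  rw [Matrix.mulVec_transpose, dotProduct_comm, ← Matrix.dotProduct_mulVec]

lemma skew_quad {k : Type*} [Fintype k] {W : Matrix k k ℝ} (hW : Wᵀ = -W) (u : k → ℝ) :
    u ⬝ᵥ (W *ᵥ u) = 0 := by
  have h := dot_transpose W u u
  rw [hW, Matrix.neg_mulVec, dotProduct_neg] at h
  linarith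

lemma reDot {k l : Type*} [Fintype k] [Fintype l] (W : Matrix k l ℝ) (x : k → ℂ) (y : l → ℂ) :
    (star x ⬝ᵥ ((W.map (algebraMap ℝ ℂ)) *ᵥ y)).re
      = (fun i => (x i).re) ⬝ᵥ (W *ᵥ fun j => (y j).re)
        + (fun i => (x i).im) ⬝ᵥ (W *ᵥ fun j => (y j).im) := by
  simp only [dotProduct, Matrix.mulVec, Pi.star_apply, Matrix.map_apply, dotProduct,
    Complex.coe_algebraMap]
  rw [← Finset.sum_add_distrib, Complex.re_sum]
  refine Finset.sum_congr rfl fun i _ => ?_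
  rw [Complex.mul_re, Complex.re_sum, Complex.im_sum]
  simp only [Complex.mul_re, Complex.mul_im, Complex.ofReal_re, Complex.ofReal_im,
    RCLike.star_def, Complex.conj_re, Complex.conj_im, Finset.mul_sum]
  rw [← Finset.sum_add_distrib, ← Finset.sum_sub_distrib]
  refine Finset.sum_congr rfl fun j _ => ?_
  ring

lemma reDotSelf {k : Type*} [Fintype k] (x : k → ℂ) (μ : ℂ) :
    (star x ⬝ᵥ (μ • x)).re = μ.re * (∑ i, Complex.normSq (x i)) := by
  have h : star x ⬝ᵥ x = ((∑ i, Complex.normSq (x i) : ℝ) : ℂ) := by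
    rw [Complex.ofReal_sum]
    simp only [dotProduct, Pi.star_apply, RCLike.star_def]
    exact Finset.sum_congr rfl fun i _ => by rw [mul_comm, Complex.mul_conj]
  rw [dotProduct_smul, smul_eq_mul, h, Complex.mul_re]
  simp

lemma sum_normSq_nonneg {k : Type*} [Fintype k] (x : k → ℂ) :
    0 ≤ ∑ i, Complex.normSq (x i) :=
  Finset.sum_nonneg fun i _ => Complex.normSq_nonneg (x i)

lemma sum_normSq_pos {k : Type*} [Fintype k] {x : k → ℂ} (hx : x ≠ 0) :
    0 < ∑ i, Complex.normSq (x i) := by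
  rcases (sum_normSq_nonneg x).lt_or_eq with h | h
  · exact h
  · exfalso
    refine hx (funext fun i => Complex.normSq_eq_zero.mp ?_)
    have := (Finset.sum_eq_zero_iff_of_nonneg
      (fun i _ => Complex.normSq_nonneg (x i))).mp h.symm
    exact this i (Finset.mem_univ i)

lemma sum_normSq_eq {k : Type*} [Fintype k] (x : k → ℂ) :
    ∑ i, Complex.normSq (x i)
      = (fun i => (x i).re) ⬝ᵥ (fun i => (x i).re)
        + (fun i => (x i).im) ⬝ᵥ (fun i => (x i).im) := by
  simp only [dotProduct, Complex.normSq_apply, ← Finset.sum_add_distrib]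

lemma dot_self_nonneg' {k : Type*} [Fintype k] (u : k → ℝ) : 0 ≤ u ⬝ᵥ u :=
  Finset.sum_nonneg fun i _ => mul_self_nonneg _

lemma dot_mulVec_le {k l : ℕ} (Z : Matrix (Fin k) (Fin l) ℝ) (u : Fin k → ℝ) (w : Fin l → ℝ) :
    |u ⬝ᵥ (Z *ᵥ w)| ≤ l2OpNorm Z * Real.sqrt (u ⬝ᵥ u) * Real.sqrt (w ⬝ᵥ w) := by
  set u' : EuclideanSpace ℝ (Fin k) := (WithLp.equiv 2 _).symm u with hu'
  set w' : EuclideanSpace ℝ (Fin l) := (WithLp.equiv 2 _).symm w with hw'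
  have h1 : u ⬝ᵥ (Z *ᵥ w) = inner ℝ u' (Matrix.toEuclideanLin Z w') := by
    rw [hw', WithLp.equiv_symm_apply, Matrix.toEuclideanLin_apply_piLp_toLp]
    simp [PiLp.inner_apply, dotProduct, hu', hw', RCLike.inner_apply, mul_comm]
  have h2 : ‖u'‖ = Real.sqrt (u ⬝ᵥ u) := by
    rw [EuclideanSpace.norm_eq]
    congr 1
    simp [dotProduct, hu', sq_abs, pow_two]
  have h3 : ‖w'‖ = Real.sqrt (w ⬝ᵥ w) := by
    rw [EuclideanSpace.norm_eq]
    congr 1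
    simp [dotProduct, hw', sq_abs, pow_two]
  rw [h1]
  calc |inner ℝ u' (Matrix.toEuclideanLin Z w')|
      ≤ ‖u'‖ * ‖Matrix.toEuclideanLin Z w'‖ := abs_real_inner_le_norm _ _
    _ ≤ ‖u'‖ * (l2OpNorm Z * ‖w'‖) := by
        refine mul_le_mul_of_nonneg_left ?_ (norm_nonneg _)
        have := (LinearMap.toContinuousLinearMap (Matrix.toEuclideanLin Z)).le_opNorm w'
        simpa [l2OpNorm] using this
    _ = l2OpNorm Z * Real.sqrt (u ⬝ᵥ u) * Real.sqrt (w ⬝ᵥ w) := by rw [h2, h3]; ring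

lemma cross_bound {k l : ℕ} (Z : Matrix (Fin k) (Fin l) ℝ) (x : Fin k → ℂ) (y : Fin l → ℂ) :
    |(star x ⬝ᵥ ((Z.map (algebraMap ℝ ℂ)) *ᵥ y)).re|
      ≤ l2OpNorm Z * Real.sqrt (∑ i, Complex.normSq (x i))
          * Real.sqrt (∑ j, Complex.normSq (y j)) := by
  rw [reDot, sum_normSq_eq x, sum_normSq_eq y]
  set rx : Fin k → ℝ := fun i => (x i).re
  set ix : Fin k → ℝ := fun i => (x i).im
  set ry : Fin l → ℝ := fun j => (y j).re
  set iy : Fin l → ℝ := fun j => (y j).im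
  have h1 := dot_mulVec_le Z rx ry
  have h2 := dot_mulVec_le Z ix iy
  set a := Real.sqrt (rx ⬝ᵥ rx)
  set b := Real.sqrt (ix ⬝ᵥ ix)
  set c := Real.sqrt (ry ⬝ᵥ ry)
  set d := Real.sqrt (iy ⬝ᵥ iy)
  have ha : a ^ 2 = rx ⬝ᵥ rx := Real.sq_sqrt (dot_self_nonneg' rx)
  have hb : b ^ 2 = ix ⬝ᵥ ix := Real.sq_sqrt (dot_self_nonneg' ix)
  have hc : c ^ 2 = ry ⬝ᵥ ry := Real.sq_sqrt (dot_self_nonneg' ry)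
  have hd : d ^ 2 = iy ⬝ᵥ iy := Real.sq_sqrt (dot_self_nonneg' iy)
  have ha0 : 0 ≤ a := Real.sqrt_nonneg _
  have hb0 : 0 ≤ b := Real.sqrt_nonneg _
  have hc0 : 0 ≤ c := Real.sqrt_nonneg _
  have hd0 : 0 ≤ d := Real.sqrt_nonneg _
  set E := Real.sqrt (rx ⬝ᵥ rx + ix ⬝ᵥ ix)
  set F := Real.sqrt (ry ⬝ᵥ ry + iy ⬝ᵥ iy)
  have hE : E ^ 2 = rx ⬝ᵥ rx + ix ⬝ᵥ ix :=
    Real.sq_sqrt (add_nonneg (dot_self_nonneg' rx) (dot_self_nonneg' ix))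
  have hF : F ^ 2 = ry ⬝ᵥ ry + iy ⬝ᵥ iy :=
    Real.sq_sqrt (add_nonneg (dot_self_nonneg' ry) (dot_self_nonneg' iy))
  have hE0 : 0 ≤ E := Real.sqrt_nonneg _
  have hF0 : 0 ≤ F := Real.sqrt_nonneg _
  have hZ0 : 0 ≤ l2OpNorm Z := norm_nonneg _
  have key : a * c + b * d ≤ E * F := by
    nlinarith [sq_nonneg (a * d - b * c), mul_nonneg hE0 hF0,
      mul_nonneg (mul_nonneg ha0 hc0) (mul_nonneg hb0 hd0), sq_nonneg (a*c + b*d - E*F),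
      sq_nonneg (a*c + b*d)]
  calc |rx ⬝ᵥ (Z *ᵥ ry) + ix ⬝ᵥ (Z *ᵥ iy)|
      ≤ |rx ⬝ᵥ (Z *ᵥ ry)| + |ix ⬝ᵥ (Z *ᵥ iy)| := abs_add_le _ _
    _ ≤ l2OpNorm Z * a * c + l2OpNorm Z * b * d := add_le_add h1 h2
    _ = l2OpNorm Z * (a * c + b * d) := by ring
    _ ≤ l2OpNorm Z * (E * F) := mul_le_mul_of_nonneg_left key hZ0
    _ = l2OpNorm Z * E * F := by ring

lemma rayleigh {k : Type*} [Fintype k] [DecidableEq k] {A : Matrix k k ℝ}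
    (hA : A.IsHermitian) (u : k → ℝ) :
    lamMin hA * (u ⬝ᵥ u) ≤ u ⬝ᵥ (A *ᵥ u) ∧ u ⬝ᵥ (A *ᵥ u) ≤ lamMax hA * (u ⬝ᵥ u) := by
  set U : Matrix k k ℝ := (hA.eigenvectorUnitary : Matrix k k ℝ) with hUdef
  have hstar : star U = Uᵀ := by
    ext i j
    simp [Matrix.star_apply]
  have hU : U * star U = 1 := Matrix.mem_unitaryGroup_iff.mp hA.eigenvectorUnitary.2
  have hsp : A = U * Matrix.diagonal (RCLike.ofReal ∘ hA.eigenvalues) * star U :=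
    hA.spectral_theorem
  set w : k → ℝ := star U *ᵥ u with hwdef
  have key : ∀ z : k → ℝ, u ⬝ᵥ (U *ᵥ z) = w ⬝ᵥ z := by
    intro z
    have h := dot_transpose U z u
    rw [hwdef, hstar, ← h, dotProduct_comm]
  have h2 : u ⬝ᵥ u = w ⬝ᵥ w := by
    have h := key w
    conv at h => lhs; rw [hwdef, Matrix.mulVec_mulVec, hU, Matrix.one_mulVec]
    exact h
  have h1 : u ⬝ᵥ (A *ᵥ u) = ∑ j, hA.eigenvalues j * (w j * w j) := by
    conv_lhs => rw [hsp]
    rw [← Matrix.mulVec_mulVec, ← Matrix.mulVec_mulVec, key]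
    simp only [dotProduct, Matrix.mulVec_diagonal]
    refine Finset.sum_congr rfl fun j _ => ?_
    have : (RCLike.ofReal ∘ hA.eigenvalues) j = hA.eigenvalues j := rfl
    rw [this]; ring
  have hbb : BddBelow (Set.range hA.eigenvalues) := Finite.bddBelow_range _
  have hbb' : BddAbove (Set.range hA.eigenvalues) := Finite.bddAbove_range _
  constructor
  · rw [h1, h2, lamMin, dotProduct, Finset.mul_sum]
    exact Finset.sum_le_sum fun j _ =>
      mul_le_mul_of_nonneg_right (ciInf_le hbb j) (mul_self_nonneg _)
  · rw [h1, h2, lamMax, dotProduct, Finset.mul_sum]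
    exact Finset.sum_le_sum fun j _ =>
      mul_le_mul_of_nonneg_right (le_ciSup hbb' j) (mul_self_nonneg _)


lemma band_arith {m av Zn c' r δ t ρ X2 Y2 SX SY A1 A2 P : ℝ}
    (e1 : A1 + t * P = ρ * X2) (e2 : A2 - t * P = ρ * Y2)
    (hM1 : m * X2 ≤ A1) (hM2 : A2 ≤ -av * Y2)
    (hcb : |P| ≤ Zn * SX * SY)
    (hSX2 : SX ^ 2 = X2) (hSY2 : SY ^ 2 = Y2)
    (hSXnn : 0 ≤ SX) (hSYnn : 0 ≤ SY)
    (ht0 : 0 ≤ t) (ht1 : t ≤ 1) (hZn0 : 0 ≤ Zn)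
    (habs1 : -δ < ρ - r) (habs2 : ρ - r < δ)
    (hδsq : δ ^ 2 = c' ^ 2 - Zn ^ 2) (hδc' : δ ≤ c')
    (hc'r : c' + r = m) (hrA : r + av = c')
    (hxy : 0 < X2 ∨ 0 < Y2) : False := by
  have hX2nn : 0 ≤ X2 := by rw [← hSX2]; positivity
  have hY2nn : 0 ≤ Y2 := by rw [← hSY2]; positivity
  have hZSS : 0 ≤ Zn * SX * SY := by positivity
  have htP : -(Zn * SX * SY) ≤ t * P := by
    rcases le_or_gt 0 P with hP0 | hP0
    · have h1 : 0 ≤ t * P := mul_nonneg ht0 hP0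
      linarith
    · have h1 : 0 ≤ (1 - t) * (-P) := mul_nonneg (by linarith) (by linarith)
      have h2 : -(Zn * SX * SY) ≤ P := by
        have := neg_abs_le P
        linarith
      nlinarith [h1, h2]
  have key1 : (m - ρ) * X2 ≤ Zn * SX * SY := by
    linarith [e1, hM1, htP]
  have key2 : (ρ + av) * Y2 ≤ Zn * SX * SY := by
    linarith [e2, hM2, htP]
  have hρ1 : c' - δ < m - ρ := by linarith
  have hρ2 : c' - δ < ρ + av := by linarith
  have hcd : 0 ≤ c' - δ := by linarith
  rcases hX2nn.lt_or_eq with hXpos | hX0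
  · rcases hY2nn.lt_or_eq with hYpos | hY0
    · have hSXpos : 0 < SX := by
        rcases hSXnn.lt_or_eq with h | h
        · exact h
        · exfalso; rw [← hSX2, ← h] at hXpos; simp at hXpos
      have hSYpos : 0 < SY := by
        rcases hSYnn.lt_or_eq with h | h
        · exact h
        · exfalso; rw [← hSY2, ← h] at hYpos; simp at hYpos
      have i1 : (m - ρ) * SX ≤ Zn * SY := by
        refine le_of_mul_le_mul_right ?_ hSXpos
        calc (m - ρ) * SX * SX = (m - ρ) * X2 := by rw [← hSX2]; ring
          _ ≤ Zn * SX * SY := key1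
          _ = Zn * SY * SX := by ring
      have i2 : (ρ + av) * SY ≤ Zn * SX := by
        refine le_of_mul_le_mul_right ?_ hSYpos
        calc (ρ + av) * SY * SY = (ρ + av) * Y2 := by rw [← hSY2]; ring
          _ ≤ Zn * SX * SY := key2
          _ = Zn * SX * SY := by ring
      have i3 : (m - ρ) * (ρ + av) ≤ Zn ^ 2 := by
        have hb1 : 0 ≤ (ρ + av) * SY := mul_nonneg (by linarith) hSYnn
        have hb2 : 0 ≤ Zn * SY := mul_nonneg hZn0 hSYnn
        have h5 := mul_le_mul i1 i2 hb1 hb2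
        refine le_of_mul_le_mul_right ?_ (mul_pos hSXpos hSYpos)
        calc (m - ρ) * (ρ + av) * (SX * SY)
            = (m - ρ) * SX * ((ρ + av) * SY) := by ring
          _ ≤ Zn * SY * (Zn * SX) := h5
          _ = Zn ^ 2 * (SX * SY) := by ring
      have hm' : m = c' + r := by linarith
      have hav' : av = c' - r := by linarith
      have hid : (m - ρ) * (ρ + av) = c' ^ 2 - (ρ - r) ^ 2 := by
        rw [hm', hav']; ring
      have hsq : (ρ - r) ^ 2 < δ ^ 2 := sq_lt_sq' habs1 habs2
      linarith [i3, hid, hδsq, hsq]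
    · have hSY0 : SY = 0 := by
        have := hSY2
        rw [← hY0] at this
        exact pow_eq_zero_iff (n := 2) (by norm_num) |>.mp this
      rw [hSY0, mul_zero] at key1
      have := mul_pos (show (0:ℝ) < m - ρ by linarith) hXpos
      linarith
  · have hYpos : 0 < Y2 := by
      rcases hxy with h | h
      · rw [← hX0] at h; exact absurd h (lt_irrefl 0)
      · exact h
    have hSX0 : SX = 0 := by
      have := hSX2
      rw [← hX0] at this
      exact pow_eq_zero_iff (n := 2) (by norm_num) |>.mp this
    rw [hSX0, mul_zero, zero_mul] at key2
    have := mul_pos (show (0:ℝ) < ρ + av by linarith) hYpos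
    linarith

theorem stmt11 {n₁ n₂ : ℕ} (hn₁ : 0 < n₁)
    (Mp : Matrix (Fin n₁) (Fin n₁) ℝ) (Mm : Matrix (Fin n₂) (Fin n₂) ℝ)
    (Z₁ : Matrix (Fin n₁) (Fin n₁) ℝ) (Z₃ : Matrix (Fin n₂) (Fin n₂) ℝ)
    (Z₂ : Matrix (Fin n₁) (Fin n₂) ℝ)
    (hMpDiag : Mp.IsDiag) (hMp : Mp.PosDef)
    (hMmDiag : Mm.IsDiag) (hMmHerm : Mm.IsHermitian) (hMm : (-Mm).PosSemidef)
    (hZ₁ : Z₁ᵀ = -Z₁) (hZ₃ : Z₃ᵀ = -Z₃)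
    (hZ₂ : l2OpNorm Z₂ < (|lamMax hMmHerm| + lamMin hMp.isHermitian) / 2)
    (hgap : (|lamMax hMmHerm| + lamMin hMp.isHermitian) / 2 < lamMin hMp.isHermitian) :
    ∃ μ ∈ spectrum ℂ
        ((Matrix.fromBlocks (Mp + Z₁) Z₂ (-Z₂ᵀ) (Mm + Z₃)).map (algebraMap ℝ ℂ)),
      0 ≤ μ.re := by
  classical
  haveI hne1 : Nonempty (Fin n₁) := ⟨⟨0, hn₁⟩⟩
  haveI hneι : Nonempty (Fin n₁ ⊕ Fin n₂) := ⟨Sum.inl ⟨0, hn₁⟩⟩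
  set m := lamMin hMp.isHermitian with hm
  set av := |lamMax hMmHerm| with hav
  set Zn := l2OpNorm Z₂ with hZn
  -- the largest eigenvalue of Mm is nonpositive
  have hlmax : lamMax hMmHerm ≤ 0 := by
    refine Real.iSup_nonpos fun j => ?_
    have hev := hMmHerm.eigenvalues_eq j
    have hps := hMm.dotProduct_mulVec_nonneg (⇑(hMmHerm.eigenvectorBasis j))
    rw [Matrix.neg_mulVec, dotProduct_neg] at hps
    rw [hev]
    simp only [RCLike.re_to_real, star_trivial] at hps ⊢
    linarith
  have hav_eq : av = -(lamMax hMmHerm) := abs_of_nonpos hlmax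
  have hZn0 : (0:ℝ) ≤ Zn := norm_nonneg _
  obtain ⟨j₀, hj₀⟩ := Finite.exists_min hMp.isHermitian.eigenvalues
  have hm_eq : m = hMp.isHermitian.eigenvalues j₀ :=
    le_antisymm (ciInf_le (Finite.bddBelow_range _) j₀) (le_ciInf hj₀)
  have hm_pos : 0 < m := hm_eq ▸ hMp.eigenvalues_pos j₀
  set c' := (av + m) / 2 with hc'
  set r := (m - av) / 2 with hrdef
  have hav0 : 0 ≤ av := abs_nonneg _
  have hZc : Zn < c' := hZ₂
  have hgap' : av < m := by
    have h := hgap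
    rw [hc'] at h
    linarith
  have hrpos : 0 < r := by rw [hrdef]; linarith
  have hrm : r < m := by rw [hrdef]; linarith
  have hc'pos : 0 < c' := lt_of_le_of_lt hZn0 hZc
  have hc'r : c' + r = m := by rw [hc', hrdef]; ring
  have hrA : r + av = c' := by rw [hc', hrdef]; ring
  set δ := Real.sqrt (c' ^ 2 - Zn ^ 2) with hδdef
  have hδsq : δ ^ 2 = c' ^ 2 - Zn ^ 2 := Real.sq_sqrt (by nlinarith)
  have hδpos : 0 < δ := Real.sqrt_pos.mpr (by nlinarith)
  have hδc' : δ ≤ c' := by nlinarith [hδsq, sq_nonneg Zn]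
  -- complex block matrices
  set Pc := (Mp + Z₁).map (algebraMap ℝ ℂ) with hPc
  set Sc := (Mm + Z₃).map (algebraMap ℝ ℂ) with hSc
  set Qc := Z₂.map (algebraMap ℝ ℂ) with hQc
  set Bc := Matrix.fromBlocks Pc 0 0 Sc with hBc
  set Kc := Matrix.fromBlocks 0 Qc (-Qcᵀ) 0 with hKc
  set Ac : ℝ → Matrix (Fin n₁ ⊕ Fin n₂) (Fin n₁ ⊕ Fin n₂) ℂ :=
    fun t => Bc + (t : ℂ) • Kc with hAcdef
  have hAc_blocks : ∀ t : ℝ,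
      Ac t = Matrix.fromBlocks Pc ((t:ℂ) • Qc) ((t:ℂ) • (-Qcᵀ)) Sc := by
    intro t
    show Bc + (t : ℂ) • Kc = _
    rw [hBc, hKc, Matrix.fromBlocks_smul, Matrix.fromBlocks_add]
    refine Matrix.fromBlocks_inj.mpr ⟨?_, ?_, ?_, ?_⟩ <;> simp
  have htarget : (Matrix.fromBlocks (Mp + Z₁) Z₂ (-Z₂ᵀ) (Mm + Z₃)).map (algebraMap ℝ ℂ)
      = Ac 1 := by
    rw [hAc_blocks, Matrix.fromBlocks_map, Complex.ofReal_one, one_smul, one_smul]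
    refine Matrix.fromBlocks_inj.mpr ⟨rfl, rfl, ?_, rfl⟩
    ext i j
    simp [hQc, Matrix.map_apply]
  have hPc' : Pc = Mp.map (algebraMap ℝ ℂ) + Z₁.map (algebraMap ℝ ℂ) := by
    ext i j; simp [hPc, Matrix.map_apply]
  have hSc' : Sc = Mm.map (algebraMap ℝ ℂ) + Z₃.map (algebraMap ℝ ℂ) := by
    ext i j; simp [hSc, Matrix.map_apply]
  have hQct : -Qcᵀ = (-Z₂ᵀ).map (algebraMap ℝ ℂ) := by
    ext i j; simp [hQc, Matrix.map_apply]
  -- quadratic form bounds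
  have hreP : ∀ x : Fin n₁ → ℂ,
      m * (∑ i, Complex.normSq (x i)) ≤ (star x ⬝ᵥ (Pc *ᵥ x)).re := by
    intro x
    rw [hPc', Matrix.add_mulVec, dotProduct_add, Complex.add_re, reDot, reDot,
      skew_quad hZ₁, skew_quad hZ₁, sum_normSq_eq, mul_add]
    have h1 := (rayleigh hMp.isHermitian (fun i => (x i).re)).1
    have h2 := (rayleigh hMp.isHermitian (fun i => (x i).im)).1
    rw [← hm] at h1 h2
    linarith
  have hreS : ∀ y : Fin n₂ → ℂ,
      (star y ⬝ᵥ (Sc *ᵥ y)).re ≤ -av * (∑ j, Complex.normSq (y j)) := by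
    intro y
    rw [hSc', Matrix.add_mulVec, dotProduct_add, Complex.add_re, reDot, reDot,
      skew_quad hZ₃, skew_quad hZ₃, sum_normSq_eq, mul_add]
    have h1 := (rayleigh hMmHerm (fun j => (y j).re)).2
    have h2 := (rayleigh hMmHerm (fun j => (y j).im)).2
    have hlm : lamMax hMmHerm = -av := by linarith
    rw [hlm] at h1 h2
    linarith
  -- the band lemma: eigenvalues of Ac t stay δ-away from the line re = r
  have hquad : ∀ t ∈ Set.Icc (0:ℝ) 1, ∀ μ : ℂ,
      (μ • (1 : Matrix (Fin n₁ ⊕ Fin n₂) (Fin n₁ ⊕ Fin n₂) ℂ) - Ac t).det = 0 →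
      δ ≤ |μ.re - r| := by
    rintro t ⟨ht0, ht1⟩ μ hdet
    by_contra hcon
    push_neg at hcon
    have habs := abs_lt.mp hcon
    obtain ⟨v, hv0, hveq⟩ := (Matrix.exists_mulVec_eq_zero_iff).mpr hdet
    have hvmul : Ac t *ᵥ v = μ • v := by
      rw [Matrix.sub_mulVec, Matrix.smul_mulVec, Matrix.one_mulVec, sub_eq_zero] at hveq
      exact hveq.symm
    set x : Fin n₁ → ℂ := v ∘ Sum.inl with hx
    set y : Fin n₂ → ℂ := v ∘ Sum.inr with hy
    have hv : v = Sum.elim x y := by funext i; cases i <;> rfl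
    rw [hAc_blocks, hv, Matrix.fromBlocks_mulVec] at hvmul
    have hrow1 : Pc *ᵥ x + ((t:ℂ) • Qc) *ᵥ y = μ • x := by
      funext i
      have h := congrFun hvmul (Sum.inl i)
      simpa using h
    have hrow2 : ((t:ℂ) • (-Qcᵀ)) *ᵥ x + Sc *ᵥ y = μ • y := by
      funext i
      have h := congrFun hvmul (Sum.inr i)
      simpa using h
    set X2 := ∑ i, Complex.normSq (x i) with hX2
    set Y2 := ∑ j, Complex.normSq (y j) with hY2
    set P : ℝ := (fun i => (x i).re) ⬝ᵥ (Z₂ *ᵥ fun j => (y j).re)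
      + (fun i => (x i).im) ⬝ᵥ (Z₂ *ᵥ fun j => (y j).im) with hPdef
    have e1 : (star x ⬝ᵥ (Pc *ᵥ x)).re + t * P = μ.re * X2 := by
      have h := congrArg (fun z => (star x ⬝ᵥ z).re) hrow1
      simp only [dotProduct_add, Complex.add_re] at h
      rw [Matrix.smul_mulVec, dotProduct_smul, smul_eq_mul, Complex.re_ofReal_mul,
        hQc, reDot Z₂ x y, reDotSelf] at h
      rw [hPdef, hX2]
      linear_combination h
    have e2 : (star y ⬝ᵥ (Sc *ᵥ y)).re - t * P = μ.re * Y2 := by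
      have h := congrArg (fun z => (star y ⬝ᵥ z).re) hrow2
      simp only [dotProduct_add, Complex.add_re] at h
      rw [Matrix.smul_mulVec, dotProduct_smul, smul_eq_mul, Complex.re_ofReal_mul,
        hQct, reDot (-Z₂ᵀ) y x, reDotSelf] at h
      rw [Matrix.neg_mulVec, Matrix.neg_mulVec, dotProduct_neg, dotProduct_neg,
        dot_transpose, dot_transpose] at h
      rw [hPdef, hY2]
      linear_combination h
    have hcb : |P| ≤ Zn * Real.sqrt X2 * Real.sqrt Y2 := by
      rw [hPdef, ← reDot Z₂ x y, hX2, hY2]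
      exact cross_bound Z₂ x y
    have hX2nn : 0 ≤ X2 := sum_normSq_nonneg x
    have hY2nn : 0 ≤ Y2 := sum_normSq_nonneg y
    have hSX2 : (Real.sqrt X2) ^ 2 = X2 := Real.sq_sqrt hX2nn
    have hSY2 : (Real.sqrt Y2) ^ 2 = Y2 := Real.sq_sqrt hY2nn
    have hM1 := hreP x
    rw [← hX2] at hM1
    have hM2 := hreS y
    rw [← hY2] at hM2
    have hxy : 0 < X2 ∨ 0 < Y2 := by
      by_cases hx0 : x = 0
      · have hy0 : y ≠ 0 := by
          intro h0
          apply hv0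
          rw [hv, hx0, h0]
          funext i; cases i <;> rfl
        right; exact sum_normSq_pos hy0
      · left; exact sum_normSq_pos hx0
    exact band_arith e1 e2 hM1 hM2 hcb hSX2 hSY2 (Real.sqrt_nonneg _) (Real.sqrt_nonneg _)
      ht0 ht1 hZn0 habs.1 habs.2 hδsq hδc' hc'r hrA hxy
  -- uniform norm bound on eigenvalues
  set R := ‖Bc‖ + ‖Kc‖ with hR
  have hRb : ∀ t ∈ Set.Icc (0:ℝ) 1, ∀ μ : ℂ,
      (μ • (1 : Matrix (Fin n₁ ⊕ Fin n₂) (Fin n₁ ⊕ Fin n₂) ℂ) - Ac t).det = 0 →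
      ‖μ‖ ≤ R := by
    rintro t ⟨ht0, ht1⟩ μ hdet
    have hspec : μ ∈ spectrum ℂ (Ac t) := (mem_spec_iff_det _ _).mpr hdet
    have h1 : ‖μ‖ ≤ ‖Ac t‖ := spectrum.norm_le_norm_of_mem hspec
    have h2 : ‖Ac t‖ ≤ R := by
      have habs : |t| ≤ 1 := abs_le.mpr ⟨by linarith, ht1⟩
      calc ‖Bc + (t:ℂ) • Kc‖ ≤ ‖Bc‖ + ‖(t:ℂ) • Kc‖ := norm_add_le _ _
        _ = ‖Bc‖ + |t| * ‖Kc‖ := by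
            rw [norm_smul, Complex.norm_real, Real.norm_eq_abs]
        _ ≤ ‖Bc‖ + 1 * ‖Kc‖ := by
            have := mul_le_mul_of_nonneg_right habs (norm_nonneg Kc)
            linarith
        _ = R := by rw [hR]; ring
    linarith
  -- base case t = 0
  have hbase : ∃ μ : ℂ,
      (μ • (1 : Matrix (Fin n₁ ⊕ Fin n₂) (Fin n₁ ⊕ Fin n₂) ℂ) - Ac 0).det = 0 ∧
      r ≤ μ.re ∧ ‖μ‖ ≤ R := by
    have hmonic := Pc.charpoly_monic
    have hdeg : Pc.charpoly.natDegree = n₁ := by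
      simpa using Pc.charpoly_natDegree_eq_dim
    obtain ⟨z, hz⟩ := IsAlgClosed.exists_root Pc.charpoly (by
      rw [Polynomial.degree_eq_natDegree hmonic.ne_zero, hdeg]
      exact_mod_cast hn₁.ne')
    have hdetP : (z • (1 : Matrix (Fin n₁) (Fin n₁) ℂ) - Pc).det = 0 := by
      rw [← detEvalCharpoly]; exact hz
    obtain ⟨x, hx0, hxeq⟩ := (Matrix.exists_mulVec_eq_zero_iff).mpr hdetP
    have hxmul : Pc *ᵥ x = z • x := by
      rw [Matrix.sub_mulVec, Matrix.smul_mulVec, Matrix.one_mulVec, sub_eq_zero] at hxeq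
      exact hxeq.symm
    have hre : m ≤ z.re := by
      have h := congrArg (fun w => (star x ⬝ᵥ w).re) hxmul
      rw [reDotSelf] at h
      have h2 := hreP x
      rw [h] at h2
      have hX := sum_normSq_pos hx0
      exact le_of_mul_le_mul_right h2 hX
    have hA0 : Ac 0 = Bc := by
      show Bc + ((0:ℝ):ℂ) • Kc = Bc
      norm_num
    have hblock : z • (1 : Matrix (Fin n₁ ⊕ Fin n₂) (Fin n₁ ⊕ Fin n₂) ℂ) - Ac 0
        = Matrix.fromBlocks (z • 1 - Pc) 0 0 (z • 1 - Sc) := by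
      rw [hA0, hBc, ← Matrix.fromBlocks_one, Matrix.fromBlocks_smul, sub_eq_add_neg,
        Matrix.fromBlocks_neg, Matrix.fromBlocks_add]
      refine Matrix.fromBlocks_inj.mpr ⟨?_, ?_, ?_, ?_⟩ <;> simp [sub_eq_add_neg]
    have hdet0 : (z • (1 : Matrix (Fin n₁ ⊕ Fin n₂) (Fin n₁ ⊕ Fin n₂) ℂ) - Ac 0).det = 0 := by
      rw [hblock, Matrix.det_fromBlocks_zero₁₂, hdetP, zero_mul]
    exact ⟨z, hdet0, by linarith, hRb 0 ⟨le_refl 0, zero_le_one⟩ z hdet0⟩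
  -- the compact set of (t, eigenvalue) pairs
  have hdetCont : Continuous fun p : ℝ × ℂ =>
      (p.2 • (1 : Matrix (Fin n₁ ⊕ Fin n₂) (Fin n₁ ⊕ Fin n₂) ℂ) - Ac p.1).det := by
    apply Continuous.matrix_det
    apply continuous_matrix
    intro i j
    show Continuous fun p : ℝ × ℂ =>
      p.2 * (1 : Matrix (Fin n₁ ⊕ Fin n₂) (Fin n₁ ⊕ Fin n₂) ℂ) i j
        - (Bc i j + (p.1:ℂ) * Kc i j)
    exact (continuous_snd.mul continuous_const).sub (continuous_const.add
      ((Complex.continuous_ofReal.comp continuous_fst).mul continuous_const))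
  set G : Set (ℝ × ℂ) := {p | p.1 ∈ Set.Icc (0:ℝ) 1 ∧ ‖p.2‖ ≤ R ∧
      (p.2 • (1 : Matrix (Fin n₁ ⊕ Fin n₂) (Fin n₁ ⊕ Fin n₂) ℂ) - Ac p.1).det = 0 ∧
      r ≤ p.2.re} with hG
  have hGclosed : IsClosed G := by
    have hGeq : G = (Prod.fst ⁻¹' Set.Icc (0:ℝ) 1)
        ∩ ((fun p : ℝ × ℂ => ‖p.2‖) ⁻¹' Set.Iic R)
        ∩ ((fun p : ℝ × ℂ =>
            (p.2 • (1 : Matrix (Fin n₁ ⊕ Fin n₂) (Fin n₁ ⊕ Fin n₂) ℂ) - Ac p.1).det) ⁻¹' {0})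
        ∩ ((fun p : ℝ × ℂ => p.2.re) ⁻¹' Set.Ici r) := by
      ext p
      simp only [hG, Set.mem_setOf_eq, Set.mem_inter_iff, Set.mem_preimage, Set.mem_Iic,
        Set.mem_singleton_iff, Set.mem_Ici]
      tauto
    rw [hGeq]
    exact (((isClosed_Icc.preimage continuous_fst).inter
      (isClosed_Iic.preimage continuous_snd.norm)).inter
      (isClosed_singleton.preimage hdetCont)).inter
      (isClosed_Ici.preimage (Complex.continuous_re.comp continuous_snd))
  have hGcompact : IsCompact G := by
    refine ((isCompact_Icc (a := (0:ℝ)) (b := 1)).prod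
      (isCompact_closedBall (0:ℂ) R)).of_isClosed_subset hGclosed ?_
    rintro p hp
    exact Set.mem_prod.mpr ⟨hp.1, by simpa [mem_closedBall_zero_iff] using hp.2.1⟩
  set S : Set ℝ := Prod.fst '' G with hS
  have hScompact : IsCompact S := hGcompact.image continuous_fst
  have hSne : S.Nonempty := by
    obtain ⟨μ₀, h1, h2, h3⟩ := hbase
    exact ⟨0, ⟨(0, μ₀), ⟨⟨le_refl 0, zero_le_one⟩, h3, h1, h2⟩, rfl⟩⟩
  have hSsub : S ⊆ Set.Icc 0 1 := by rintro t ⟨p, hp, rfl⟩; exact hp.1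
  set u := sSup S with hu
  have huS : u ∈ S := hScompact.sSup_mem hSne
  obtain ⟨pu, hpuG, hpu1⟩ := huS
  have huIcc : u ∈ Set.Icc (0:ℝ) 1 := hSsub ⟨pu, hpuG, hpu1⟩
  by_cases hueq : u = 1
  · -- done: extract the eigenvalue of Ac 1
    have hp1 : pu.1 = 1 := hpu1.trans hueq
    have hdet1 : (pu.2 • (1 : Matrix (Fin n₁ ⊕ Fin n₂) (Fin n₁ ⊕ Fin n₂) ℂ) - Ac 1).det = 0 := by
      have h := hpuG.2.2.1
      rwa [hp1] at h
    refine ⟨pu.2, ?_, ?_⟩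
    · rw [htarget]
      exact (mem_spec_iff_det _ _).mpr hdet1
    · have h := hpuG.2.2.2
      linarith
  · exfalso
    have hult : u < 1 := lt_of_le_of_ne huIcc.2 hueq
    have hu0 : 0 ≤ u := huIcc.1
    have hdetu : (pu.2 • (1 : Matrix (Fin n₁ ⊕ Fin n₂) (Fin n₁ ⊕ Fin n₂) ℂ) - Ac u).det = 0 := by
      have h := hpuG.2.2.1
      rwa [hpu1] at h
    have hreu : r ≤ pu.2.re := hpuG.2.2.2
    set N := Fintype.card (Fin n₁ ⊕ Fin n₂) with hN
    have hεpos : 0 < δ ^ N := pow_pos hδpos N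
    have hgc : Continuous fun t : ℝ =>
        (pu.2 • (1 : Matrix (Fin n₁ ⊕ Fin n₂) (Fin n₁ ⊕ Fin n₂) ℂ) - Ac t).det :=
      hdetCont.comp (continuous_id.prodMk continuous_const)
    have h0 : Filter.Tendsto
        (fun t : ℝ => ‖(pu.2 • (1 : Matrix (Fin n₁ ⊕ Fin n₂) (Fin n₁ ⊕ Fin n₂) ℂ)
          - Ac t).det‖) (nhds u) (nhds 0) := by
      have h := (hgc.tendsto u).norm
      rwa [hdetu, norm_zero] at h
    have hev : ∀ᶠ t in nhds u,
        ‖(pu.2 • (1 : Matrix (Fin n₁ ⊕ Fin n₂) (Fin n₁ ⊕ Fin n₂) ℂ) - Ac t).det‖ < δ ^ N :=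
      h0.eventually_lt_const hεpos
    obtain ⟨η, hη, hball⟩ := Metric.eventually_nhds_iff.mp hev
    set t' := min 1 (u + η / 2) with ht'def
    have ht'u : u < t' := lt_min hult (by linarith)
    have ht'1 : t' ≤ 1 := min_le_left _ _
    have ht'0 : 0 ≤ t' := le_trans hu0 ht'u.le
    have ht'dist : dist t' u < η := by
      have h1 : t' ≤ u + η / 2 := min_le_right _ _
      rw [Real.dist_eq, abs_of_nonneg (by linarith : (0:ℝ) ≤ t' - u)]
      linarith
    have hsmall : ‖(pu.2 • (1 : Matrix (Fin n₁ ⊕ Fin n₂) (Fin n₁ ⊕ Fin n₂) ℂ)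
        - Ac t').det‖ < δ ^ N := hball ht'dist
    have hex : ∃ z : ℂ,
        (z • (1 : Matrix (Fin n₁ ⊕ Fin n₂) (Fin n₁ ⊕ Fin n₂) ℂ) - Ac t').det = 0 ∧
        r ≤ z.re := by
      by_contra hno
      push_neg at hno
      set q := (Ac t').charpoly with hq
      have hqm : q.Monic := Matrix.charpoly_monic _
      have hqsplit : q.Splits := IsAlgClosed.splits q
      have hcard : Multiset.card q.roots = N := by
        rw [Polynomial.splits_iff_card_roots.mp hqsplit, hN]
        exact (Ac t').charpoly_natDegree_eq_dim
      have hprodeq : q.eval pu.2 = (q.roots.map fun z => pu.2 - z).prod := by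
        conv_lhs => rw [hqsplit.eq_prod_roots_of_monic hqm]
        rw [Polynomial.eval_multiset_prod, Multiset.map_map]
        simp
      have hlb : δ ^ N ≤ ‖q.eval pu.2‖ := by
        rw [hprodeq]
        have hall : ∀ w ∈ (q.roots.map fun z => pu.2 - z), δ ≤ ‖w‖ := by
          intro w hw
          obtain ⟨z, hz, rfl⟩ := Multiset.mem_map.mp hw
          have hzr : (z • (1 : Matrix (Fin n₁ ⊕ Fin n₂) (Fin n₁ ⊕ Fin n₂) ℂ)
              - Ac t').det = 0 := by
            rw [← detEvalCharpoly]
            exact (Polynomial.mem_roots'.mp hz).2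
          have hzlt : z.re < r := hno z hzr
          have hband := hquad t' ⟨ht'0, ht'1⟩ z hzr
          rw [abs_of_neg (by linarith : z.re - r < 0)] at hband
          have h4 : δ ≤ (pu.2 - z).re := by
            simp only [Complex.sub_re]
            linarith [hreu]
          calc δ ≤ (pu.2 - z).re := h4
            _ ≤ ‖pu.2 - z‖ := by
                simpa using Complex.re_le_norm (pu.2 - z)
        have hp := prod_lb hδpos.le _ hall
        rwa [Multiset.card_map, hcard] at hp
      have heq : q.eval pu.2
          = (pu.2 • (1 : Matrix (Fin n₁ ⊕ Fin n₂) (Fin n₁ ⊕ Fin n₂) ℂ) - Ac t').det :=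
        detEvalCharpoly _ _
      rw [heq] at hlb
      linarith [hsmall, hlb]
    obtain ⟨z, hz1, hz2⟩ := hex
    have hzR : ‖z‖ ≤ R := hRb t' ⟨ht'0, ht'1⟩ z hz1
    have ht'S : t' ∈ S := ⟨(t', z), ⟨⟨ht'0, ht'1⟩, hzR, hz1, hz2⟩, rfl⟩
    have hle : t' ≤ u := by
      rw [hu]
      exact le_csSup hScompact.bddAbove ht'S
    linarith
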